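/- Let F : ℕ → ℤ satisfy F 0 = 0, F 1 = 1, F (n+2) = -2 F (n+1) + 2 F n. Then for all n, as real numbers: F(n+1) * F(n) = (1/12) * ((-1+√3)^{2n+1} + (-1-√3)^{2n+1} - (-2)^{n+1}). -/
import Mathlib

theorem stmt_5 (F : ℕ → ℤ) (h0 : F 0 = 0) (h1 : F 1 = 1)
    (hrec : ∀ n, F (n+2) = -2 * F (n+1) + 2 * F n) :
    ∀ n : ℕ, ((F (n+1) : ℝ)) * (F n : ℝ) =
      (1/12) * ((-1 + Real.sqrt 3)^(2*n+1) + (-1 - Real.sqrt 3)^(2*n+1) - (-2)^(n+1)) := by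
  set s := Real.sqrt 3 with hs
  have hs2 : s ^ 2 = 3 := Real.sq_sqrt (by norm_num)
  have hspos : (0:ℝ) < s := Real.sqrt_pos.mpr (by norm_num)
  have key : ∀ n : ℕ, (F n : ℝ) = ((-1 + s)^n - (-1 - s)^n) / (2*s) := by
    intro n
    induction n using Nat.twoStepInduction with
    | zero => simp [h0]
    | one => rw [h1]; field_simp; ring
    | more n ih1 ih2 =>
      have h := hrec n
      push_cast [h]
      rw [ih1, ih2]
      have ha : (-1 + s)^(n+2) = -2 * (-1+s)^(n+1) + 2 * (-1+s)^n := by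
        have : (-1 + s)^2 = -2 * (-1+s) + 2 := by nlinarith [hs2]
        calc (-1 + s)^(n+2) = (-1+s)^n * (-1+s)^2 := by ring
        _ = (-1+s)^n * (-2 * (-1+s) + 2) := by rw [this]
        _ = -2 * (-1+s)^(n+1) + 2 * (-1+s)^n := by ring
      have hb : (-1 - s)^(n+2) = -2 * (-1-s)^(n+1) + 2 * (-1-s)^n := by
        have : (-1 - s)^2 = -2 * (-1-s) + 2 := by nlinarith [hs2]
        calc (-1 - s)^(n+2) = (-1-s)^n * (-1-s)^2 := by ring
        _ = (-1-s)^n * (-2 * (-1-s) + 2) := by rw [this]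
        _ = -2 * (-1-s)^(n+1) + 2 * (-1-s)^n := by ring
      rw [ha, hb]; ring
  intro n
  rw [key (n+1), key n]
  have hprod : ((-1 + s) * (-1 - s)) = -2 := by nlinarith [hs2]
  have hmul : ((-1+s)^(n+1) * (-1-s)^n + (-1+s)^n * (-1-s)^(n+1))
      = ((-1+s)*(-1-s))^n * ((-1+s) + (-1-s)) := by
    rw [mul_pow]; ring
  have hne : s ≠ 0 := ne_of_gt hspos
  field_simp
  have e1 : (-1+s)^(2*n+1) = (-1+s)^(n+1) * (-1+s)^n := by rw [← pow_add]; ring_nf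
  have e2 : (-1-s)^(2*n+1) = (-1-s)^(n+1) * (-1-s)^n := by rw [← pow_add]; ring_nf
  rw [e1, e2]
  have hsum : (-1+s)^(n+1)*(-1-s)^n + (-1+s)^n*(-1-s)^(n+1) = (-2)^(n+1) := by
    rw [hmul, hprod]; ring
  linear_combination (-12) * hsum -
    4 * ((-1+s)^(n+1)*(-1+s)^n + (-1-s)^(n+1)*(-1-s)^n - (-2)^(n+1)) * hs2
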